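/- Under the adaptive decreasing clicking policy in its transient phase, where block j clicks during its first T₀ − j·τ steps, for every block index i ≥ 1 with (i−1)·τ ≤ T₀ the opinion at the start of block i satisfies x(i·s) = (1 − Υᵢ)·x₀ + Υᵢ·u₀, where Υᵢ = (1 − η) · Σ_{j=0}^{i−1} B^{(j+1)s − T₀ + (i−1−j)τ} · Z^{Σ_{q=0}^{j−1} (T₀ − (i−1−q)τ)} · (1 − β^{T₀ − (i−1−j)τ}). -/

import Mathlib

/-- The coefficient `Υᵢ / (1 - η)` appearing in the adaptive decreasing transient formula. -/
private noncomputable def Ups (α β : ℝ) (s T₀ τ i : ℕ) : ℝ :=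
  ∑ j ∈ Finset.range i,
    (β / (α + β)) ^ ((j + 1) * s - T₀ + (i - 1 - j) * τ) *
      (α + β) ^ (∑ q ∈ Finset.range j, (T₀ - (i - 1 - q) * τ)) *
      (1 - β ^ (T₀ - (i - 1 - j) * τ))

private lemma click_phase (α β x₀ u₀ : ℝ) (x : ℕ → ℝ) (clk : ℕ → ℕ)
    (hdyn : ∀ k, x (k + 1) =
      if clk k = 1 then α * x₀ + β * x k + (1 - α - β) * u₀
      else α / (α + β) * x₀ + β / (α + β) * x k)
    (hβ1 : (1:ℝ) - β ≠ 0)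
    (a : ℕ) (y : ℝ) (hxa : x a = (1 - y) * x₀ + y * u₀) :
    ∀ m, (∀ t, t < m → clk (a + t) = 1) →
      x (a + m) = (1 - (β ^ m * y + (1 - β ^ m) * ((1 - α - β) / (1 - β)))) * x₀
        + (β ^ m * y + (1 - β ^ m) * ((1 - α - β) / (1 - β))) * u₀ := by
  intro m
  induction m with
  | zero => intro _; simpa using hxa
  | succ m ih =>
    intro hc
    have h1 := ih (fun t ht => hc t (by omega))
    have h2 : x (a + (m + 1)) = α * x₀ + β * x (a + m) + (1 - α - β) * u₀ := by
      rw [show a + (m + 1) = (a + m) + 1 by omega, hdyn, if_pos (hc m (by omega))]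
    rw [h2, h1]
    field_simp
    ring

private lemma noclick_phase (α β x₀ u₀ : ℝ) (x : ℕ → ℝ) (clk : ℕ → ℕ)
    (hdyn : ∀ k, x (k + 1) =
      if clk k = 1 then α * x₀ + β * x k + (1 - α - β) * u₀
      else α / (α + β) * x₀ + β / (α + β) * x k)
    (hZ : α + β ≠ 0)
    (a : ℕ) (y : ℝ) (hxa : x a = (1 - y) * x₀ + y * u₀) :
    ∀ m, (∀ t, t < m → clk (a + t) = 0) →
      x (a + m) = (1 - (β / (α + β)) ^ m * y) * x₀ + (β / (α + β)) ^ m * y * u₀ := by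
  intro m
  induction m with
  | zero => intro _; simpa using hxa
  | succ m ih =>
    intro hc
    have h1 := ih (fun t ht => hc t (by omega))
    have h2 : x (a + (m + 1)) = α / (α + β) * x₀ + β / (α + β) * x (a + m) := by
      rw [show a + (m + 1) = (a + m) + 1 by omega, hdyn,
        if_neg (by simp [hc m (by omega)])]
    rw [h2, h1]
    have hab : α / (α + β) = 1 - β / (α + β) := by
      rw [eq_sub_iff_add_eq, ← add_div, div_self hZ]
    rw [hab]
    ring

private lemma block_step (α β x₀ u₀ : ℝ) (hβ1 : (1:ℝ) - β ≠ 0) (hZ : α + β ≠ 0)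
    (s T₀ τ : ℕ) (hs1 : 1 ≤ s) (hT₀ : T₀ ≤ s)
    (clk : ℕ → ℕ) (hclk : ∀ k, clk k = if k % s < T₀ - (k / s) * τ then 1 else 0)
    (x : ℕ → ℝ)
    (hdyn : ∀ k, x (k + 1) =
      if clk k = 1 then α * x₀ + β * x k + (1 - α - β) * u₀
      else α / (α + β) * x₀ + β / (α + β) * x k)
    (b : ℕ) (y : ℝ) (hxb : x (b * s) = (1 - y) * x₀ + y * u₀) :
    x ((b + 1) * s) =
      (1 - (β / (α + β)) ^ (s - (T₀ - b * τ)) *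
          (β ^ (T₀ - b * τ) * y + (1 - β ^ (T₀ - b * τ)) * ((1 - α - β) / (1 - β)))) * x₀
      + (β / (α + β)) ^ (s - (T₀ - b * τ)) *
          (β ^ (T₀ - b * τ) * y + (1 - β ^ (T₀ - b * τ)) * ((1 - α - β) / (1 - β))) * u₀ := by
  have hs : 0 < s := by omega
  have hTs : T₀ - b * τ ≤ s := by omega
  have hdiv : ∀ t, t < s → (b * s + t) / s = b := by
    intro t ht
    rw [mul_comm, Nat.mul_add_div hs, Nat.div_eq_of_lt ht]
    omega
  have hmod : ∀ t, t < s → (b * s + t) % s = t := by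
    intro t ht
    rw [mul_comm, Nat.mul_add_mod, Nat.mod_eq_of_lt ht]
  have hclick := click_phase α β x₀ u₀ x clk hdyn hβ1 (b * s) y hxb (T₀ - b * τ)
    (by
      intro t ht
      rw [hclk, hdiv t (by omega), hmod t (by omega)]
      rw [if_pos ht])
  have hno := noclick_phase α β x₀ u₀ x clk hdyn hZ (b * s + (T₀ - b * τ))
    (β ^ (T₀ - b * τ) * y + (1 - β ^ (T₀ - b * τ)) * ((1 - α - β) / (1 - β))) hclick
    (s - (T₀ - b * τ))
    (by
      intro t ht
      have h1 : b * s + (T₀ - b * τ) + t = b * s + ((T₀ - b * τ) + t) := by omega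
      rw [h1, hclk, hdiv ((T₀ - b * τ) + t) (by omega), hmod ((T₀ - b * τ) + t) (by omega)]
      rw [if_neg (by omega)])
  have hend : b * s + (T₀ - b * τ) + (s - (T₀ - b * τ)) = (b + 1) * s := by
    have : (b + 1) * s = b * s + s := by ring
    omega
  rw [hend] at hno
  exact hno

private lemma ups_succ (α β : ℝ) (hZ : α + β ≠ 0) (s T₀ τ : ℕ) (hT₀ : T₀ ≤ s)
    (i : ℕ) (htr : i * τ ≤ T₀) :
    Ups α β s T₀ τ (i + 1) =
      (β / (α + β)) ^ (s - (T₀ - i * τ)) * β ^ (T₀ - i * τ) * Ups α β s T₀ τ i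
        + (β / (α + β)) ^ (s - (T₀ - i * τ)) * (1 - β ^ (T₀ - i * τ)) := by
  unfold Ups
  rw [Finset.sum_range_succ']
  simp only [Nat.add_sub_cancel]
  have hstep : ∀ j ∈ Finset.range i,
      (β / (α + β)) ^ ((j + 1 + 1) * s - T₀ + (i - (j + 1)) * τ) *
          (α + β) ^ (∑ q ∈ Finset.range (j + 1), (T₀ - (i - q) * τ)) *
          (1 - β ^ (T₀ - (i - (j + 1)) * τ))
      = (β / (α + β)) ^ (s - (T₀ - i * τ)) * β ^ (T₀ - i * τ) *
        ((β / (α + β)) ^ ((j + 1) * s - T₀ + (i - 1 - j) * τ) *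
          (α + β) ^ (∑ q ∈ Finset.range j, (T₀ - (i - 1 - q) * τ)) *
          (1 - β ^ (T₀ - (i - 1 - j) * τ))) := by
    intro j hj
    simp only [Finset.mem_range] at hj
    have e1 : i - (j + 1) = i - 1 - j := by omega
    have hβT : β ^ (T₀ - i * τ) = (β / (α + β)) ^ (T₀ - i * τ) * (α + β) ^ (T₀ - i * τ) := by
      rw [← mul_pow, div_mul_cancel₀ _ hZ]
    have hms : s ≤ (j + 1) * s := Nat.le_mul_of_pos_left s (by omega)
    have hm2 : (j + 1 + 1) * s = (j + 1) * s + s := by ring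
    have e2 : (j + 1 + 1) * s - T₀ + (i - 1 - j) * τ
        = (s - (T₀ - i * τ)) + ((T₀ - i * τ) + ((j + 1) * s - T₀ + (i - 1 - j) * τ)) := by
      omega
    have e3 : (∑ q ∈ Finset.range (j + 1), (T₀ - (i - q) * τ))
        = (T₀ - i * τ) + ∑ q ∈ Finset.range j, (T₀ - (i - 1 - q) * τ) := by
      rw [Finset.sum_range_succ']
      simp only [Nat.sub_zero]
      rw [add_comm]
      congr 1
      refine Finset.sum_congr rfl (fun q hq => ?_)
      have : i - (q + 1) = i - 1 - q := by omega
      rw [this]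
    rw [e1, e2, e3, pow_add, pow_add, pow_add, hβT]
    ring
  rw [Finset.sum_congr rfl hstep, ← Finset.mul_sum]
  have e0 : (0 + 1) * s - T₀ + (i - 0) * τ = s - (T₀ - i * τ) := by
    have h1 : (0 + 1) * s = s := by ring
    have h2 : (i - 0) * τ = i * τ := by rw [Nat.sub_zero]
    rw [h1, h2]
    omega
  rw [e0]
  simp only [Finset.range_zero, Finset.sum_empty, pow_zero, mul_one, Nat.sub_zero]

theorem adaptive_decreasing_transient_block_opinion
    (α β x₀ u₀ : ℝ) (hα : 0 < α) (hβ : 0 < β) (hαβ : α + β ≤ 1)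
    (hx₀ : -1 ≤ x₀ ∧ x₀ ≤ 1) (hu₀ : -1 ≤ u₀ ∧ u₀ ≤ 1)
    (s T₀ τ : ℕ) (hs : 1 ≤ s) (hT₀ : T₀ ≤ s) (hτ : 1 ≤ τ)
    (clk : ℕ → ℕ) (hclk : ∀ k, clk k = if k % s < T₀ - (k / s) * τ then 1 else 0)
    (x : ℕ → ℝ) (hx0 : x 0 = x₀)
    (hdyn : ∀ k, x (k + 1) =
      if clk k = 1 then α * x₀ + β * x k + (1 - α - β) * u₀
      else α / (α + β) * x₀ + β / (α + β) * x k)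
    (i : ℕ) (hi : 1 ≤ i) (htr : (i - 1) * τ ≤ T₀) :
    x (i * s) =
      (1 - (1 - α / (1 - β)) * ∑ j ∈ Finset.range i,
          (β / (α + β)) ^ ((j + 1) * s - T₀ + (i - 1 - j) * τ) *
            (α + β) ^ (∑ q ∈ Finset.range j, (T₀ - (i - 1 - q) * τ)) *
            (1 - β ^ (T₀ - (i - 1 - j) * τ))) * x₀ +
      ((1 - α / (1 - β)) * ∑ j ∈ Finset.range i,
          (β / (α + β)) ^ ((j + 1) * s - T₀ + (i - 1 - j) * τ) *
            (α + β) ^ (∑ q ∈ Finset.range j, (T₀ - (i - 1 - q) * τ)) *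
            (1 - β ^ (T₀ - (i - 1 - j) * τ))) * u₀ := by
  have hZ : α + β ≠ 0 := by positivity
  have hβ1 : (1:ℝ) - β ≠ 0 := ne_of_gt (by linarith)
  have hcc : (1 - α - β) / (1 - β) = 1 - α / (1 - β) := by
    field_simp
    ring
  have main : ∀ n, (n - 1) * τ ≤ T₀ →
      x (n * s) = (1 - (1 - α / (1 - β)) * Ups α β s T₀ τ n) * x₀
        + ((1 - α / (1 - β)) * Ups α β s T₀ τ n) * u₀ := by
    intro n
    induction n with
    | zero =>
      intro _
      simp [Ups, hx0]
    | succ n ih =>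
      intro h
      have htn : n * τ ≤ T₀ := by simpa using h
      have hprev : (n - 1) * τ ≤ T₀ :=
        le_trans (Nat.mul_le_mul_right τ (by omega)) htn
      have hb := block_step α β x₀ u₀ hβ1 hZ s T₀ τ hs hT₀ clk hclk x hdyn n
        ((1 - α / (1 - β)) * Ups α β s T₀ τ n) (ih hprev)
      rw [hcc] at hb
      rw [hb, ups_succ α β hZ s T₀ τ hT₀ n htn]
      ring
  have := main i htr
  simpa only [Ups] using this
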